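/- Under the viscous approximation setup, for each t > 0 and every x ≥ 0 one has √ε |∂ₓP(t,x)| ≤ ‖u(t,·)‖_{L²(0,∞)}; that is, √ε ‖∂ₓP(t,·)‖_{L^∞(0,∞)} ≤ ‖u(t,·)‖_{L²(0,∞)}. -/

import Mathlib

open MeasureTheory Set Filter

theorem stmt2
    (ε γ : ℝ) (hε : 0 < ε) (hε1 : ε < 1) (hγ : 0 < γ)
    (u P ut ux uxx Px Pxx : ℝ → ℝ → ℝ) (gε u0 : ℝ → ℝ)
    (hut : ∀ t x : ℝ, HasDerivAt (fun s => u s x) (ut t x) t)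
    (hux : ∀ t x : ℝ, HasDerivAt (fun y => u t y) (ux t x) x)
    (huxx : ∀ t x : ℝ, HasDerivAt (fun y => ux t y) (uxx t x) x)
    (hPx : ∀ t x : ℝ, HasDerivAt (fun y => P t y) (Px t x) x)
    (hPxx : ∀ t x : ℝ, HasDerivAt (fun y => Px t y) (Pxx t x) x)
    (heq1 : ∀ t x : ℝ, 0 < t → 0 < x →
      ut t x + u t x * ux t x = γ * P t x + ε * uxx t x)
    (heq2 : ∀ t x : ℝ, 0 < t → 0 < x →
      -(ε * Pxx t x) + Px t x = u t x)
    (hbu : ∀ t : ℝ, 0 < t → u t 0 = gε t)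
    (hbP : ∀ t : ℝ, 0 < t → P t 0 = 0)
    (hinit : ∀ x : ℝ, u 0 x = u0 x)
    (hu2 : ∀ t : ℝ, IntegrableOn (fun x => (u t x)^2) (Ioi 0))
    (hux2 : ∀ t : ℝ, IntegrableOn (fun x => (ux t x)^2) (Ioi 0))
    (hP2 : ∀ t : ℝ, IntegrableOn (fun x => (P t x)^2) (Ioi 0))
    (hPx2 : ∀ t : ℝ, IntegrableOn (fun x => (Px t x)^2) (Ioi 0))
    (hPxx2 : ∀ t : ℝ, IntegrableOn (fun x => (Pxx t x)^2) (Ioi 0))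
    (hu1 : ∀ t : ℝ, IntegrableOn (fun x => u t x) (Ioi 0))
    (hud : ∀ t : ℝ, Tendsto (fun x => u t x) atTop (nhds 0))
    (huxd : ∀ t : ℝ, Tendsto (fun x => ux t x) atTop (nhds 0))
    (hPd : ∀ t : ℝ, Tendsto (fun x => P t x) atTop (nhds 0))
    (hPxd : ∀ t : ℝ, Tendsto (fun x => Px t x) atTop (nhds 0))
    :
    ∀ t : ℝ, 0 < t → ∀ x : ℝ, 0 ≤ x →
      Real.sqrt ε * |Px t x| ≤ Real.sqrt (∫ y in Ioi (0:ℝ), (u t y)^2) := by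
  intro t ht x hx
  set C := ∫ y in Ioi (0:ℝ), (u t y)^2 with hC
  have hCnn : 0 ≤ C := integral_nonneg (fun y => sq_nonneg _)
  have hcu : Continuous (fun y => u t y) :=
    continuous_iff_continuousAt.mpr fun y => (hux t y).differentiableAt.continuousAt
  have hcPx : Continuous (fun y => Px t y) :=
    continuous_iff_continuousAt.mpr fun y => (hPxx t y).differentiableAt.continuousAt
  have hcG : Continuous (fun y => 2 * Px t y * (Px t y - u t y)) :=
    (continuous_const.mul hcPx).mul (hcPx.sub hcu)
  have hcF : Continuous (fun y => ε * (Px t y)^2) := continuous_const.mul (hcPx.pow 2)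
  have hcN : Continuous (fun y => -((u t y)^2)) := (hcu.pow 2).neg
  have key : ε * (Px t x)^2 ≤ C := by
    have hev : ∀ b ≥ x, ε * (Px t x)^2 ≤ ε * (Px t b)^2 + C := by
      intro b hb
      have hFTC : ∫ y in x..b, 2 * Px t y * (Px t y - u t y)
          = ε * (Px t b)^2 - ε * (Px t x)^2 := by
        apply intervalIntegral.integral_eq_sub_of_hasDeriv_right_of_le hb
        · exact hcF.continuousOn
        · intro y hy
          have hy0 : 0 < y := lt_of_le_of_lt hx hy.1
          have he2 := heq2 t y ht hy0
          have h := (HasDerivAt.const_mul ε ((hPxx t y).pow 2)).hasDerivWithinAt (s := Ioi y)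
          convert h using 1
          case e'_8 => rfl
          push_cast
          linear_combination (2 * Px t y) * he2
        · exact hcG.intervalIntegrable x b
      have hmono : ∫ y in x..b, -((u t y)^2) ≤ ∫ y in x..b, 2 * Px t y * (Px t y - u t y) := by
        apply intervalIntegral.integral_mono_on hb
        · exact hcN.intervalIntegrable x b
        · exact hcG.intervalIntegrable x b
        · intro y hy
          nlinarith [sq_nonneg (Px t y - u t y), sq_nonneg (Px t y)]
      have hle : ∫ y in x..b, (u t y)^2 ≤ C := by
        rw [intervalIntegral.integral_of_le hb]
        apply setIntegral_mono_set (hu2 t)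
        · exact Filter.Eventually.of_forall (fun y => sq_nonneg _)
        · exact Filter.Eventually.of_forall
            (fun y hy => (Ioc_subset_Ioi_self.trans (Ioi_subset_Ioi hx)) hy)
      have hneg : ∫ y in x..b, -((u t y)^2) = -(∫ y in x..b, (u t y)^2) := by
        simp [intervalIntegral.integral_neg]
      linarith [hFTC ▸ hmono]
    have hlim : Tendsto (fun b => ε * (Px t b)^2 + C) atTop (nhds (ε * 0^2 + C)) := by
      exact ((((hPxd t).pow 2).const_mul ε).add_const C)
    have := ge_of_tendsto hlim (Filter.eventually_atTop.mpr ⟨x, hev⟩)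
    simpa using this
  have h2 : Real.sqrt (ε * (Px t x)^2) ≤ Real.sqrt C := Real.sqrt_le_sqrt key
  rwa [Real.sqrt_mul hε.le, Real.sqrt_sq_eq_abs] at h2
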